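/- Let N ≥ 3, let a ∈ C²(ℝ) with a(s) ≥ ν > 0 for all s ∈ ℝ, let k > 0 and a₁ > 0 with lim_{s→+∞} a(s)/s^k = a₁, let 1 < p < ((k+1)N+2)/(N−2) and m > 0, let g be the solution of g'(s) = 1/√(a(g(s))), g(0) = 0, and let h(t) = (|g(t)|^{p−1} g(t) − m g(t))/√(a(g(t))). Assume that the dual problem −Δv = h(v) in ℝ^N, v > 0, v radially symmetric, has at most one solution v ∈ C²(ℝ^N) with v, |∇v| ∈ L²(ℝ^N), up to translations. Then the problem −a(u)Δu − (1/2)a'(u)|∇u|² + m u = u^p in ℝ^N, u > 0, u radially symmetric, has at most one solution u ∈ C²(ℝ^N) with u, |∇u| ∈ L²(ℝ^N) and a(u)|∇u|² ∈ L¹(ℝ^N), up to translations; that is, any two such solutions u₁, u₂ satisfy u₁(·) = u₂(· + x₀) for some x₀ ∈ ℝ^N. -/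

import Mathlib

open Filter MeasureTheory Real Topology

/-- The Laplacian of `u : ℝ^N → ℝ`, as the sum of second partial derivatives. -/
noncomputable def lap {N : ℕ} (u : EuclideanSpace ℝ (Fin N) → ℝ)
    (x : EuclideanSpace ℝ (Fin N)) : ℝ :=
  ∑ i : Fin N, fderiv ℝ (fun y => fderiv ℝ u y (EuclideanSpace.single i 1)) x
    (EuclideanSpace.single i 1)

/-- `v` is a positive radial classical `H¹` solution of the dual problem `-Δv = h(v)`. -/
def IsDualSolution (N : ℕ) (h : ℝ → ℝ) (v : EuclideanSpace ℝ (Fin N) → ℝ) : Prop :=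
  ContDiff ℝ 2 v ∧
  MemLp v 2 volume ∧
  MemLp (fun x => ‖gradient v x‖) 2 volume ∧
  (∀ x, 0 < v x) ∧
  (∀ x y, ‖x‖ = ‖y‖ → v x = v y) ∧
  (∀ x, -lap v x = h (v x))

/-- `u` is a positive radial solution in `X ∩ C²(ℝ^N)` of the quasi-linear problem. -/
def IsQLSolution (N : ℕ) (a : ℝ → ℝ) (m p : ℝ)
    (u : EuclideanSpace ℝ (Fin N) → ℝ) : Prop :=
  ContDiff ℝ 2 u ∧
  MemLp u 2 volume ∧
  MemLp (fun x => ‖gradient u x‖) 2 volume ∧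
  Integrable (fun x => a (u x) * ‖gradient u x‖ ^ 2) volume ∧
  (∀ x, 0 < u x) ∧
  (∀ x y, ‖x‖ = ‖y‖ → u x = u y) ∧
  (∀ x, -(a (u x) * lap u x) - (1 / 2) * deriv a (u x) * ‖gradient u x‖ ^ 2
      + m * u x = u x ^ p)

/-! ### Auxiliary lemmas -/

section Aux

open intervalIntegral

variable {a g : ℝ → ℝ} {ν : ℝ} {n : ℕ}

lemma sqa_pos (hν : 0 < ν) (hb : ∀ s, ν ≤ a s) (t : ℝ) : 0 < Real.sqrt (a t) :=
  Real.sqrt_pos.2 (lt_of_lt_of_le hν (hb t))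

lemma hasDerivAt_G (ha : Continuous a) (t : ℝ) :
    HasDerivAt (fun t => ∫ s in (0:ℝ)..t, Real.sqrt (a s)) (Real.sqrt (a t)) t :=
  integral_hasDerivAt_right ((Real.continuous_sqrt.comp ha).intervalIntegrable _ _)
    ((Real.continuous_sqrt.comp ha).stronglyMeasurableAtFilter _ _)
    (Real.continuous_sqrt.comp ha).continuousAt

lemma contDiff_G (ha : ContDiff ℝ 2 a) (hν : 0 < ν) (hb : ∀ s, ν ≤ a s) :
    ContDiff ℝ 2 (fun t => ∫ s in (0:ℝ)..t, Real.sqrt (a s)) := by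
  have hd : deriv (fun t => ∫ s in (0:ℝ)..t, Real.sqrt (a s)) = fun t => Real.sqrt (a t) :=
    funext fun t => (hasDerivAt_G ha.continuous t).deriv
  have hsqa : ContDiff ℝ 1 fun t => Real.sqrt (a t) := by
    rw [contDiff_iff_contDiffAt]
    intro t
    exact (Real.contDiffAt_sqrt (ne_of_gt (lt_of_lt_of_le hν (hb t)))).comp t
      ((ha.of_le (by norm_num)).contDiffAt)
  rw [show (2 : WithTop ℕ∞) = 1 + 1 from rfl, contDiff_succ_iff_deriv]
  refine ⟨fun t => (hasDerivAt_G ha.continuous t).differentiableAt, by simp, ?_⟩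
  rw [hd]; exact hsqa

lemma strictMono_G (ha : Continuous a) (hν : 0 < ν) (hb : ∀ s, ν ≤ a s) :
    StrictMono (fun t => ∫ s in (0:ℝ)..t, Real.sqrt (a s)) := by
  apply strictMono_of_deriv_pos
  intro t
  rw [(hasDerivAt_G ha t).deriv]
  exact sqa_pos hν hb t

lemma G_g_id (ha : Continuous a) (hν : 0 < ν) (hb : ∀ s, ν ≤ a s)
    (hg : ∀ s, HasDerivAt g (1 / Real.sqrt (a (g s))) s) (hg0 : g 0 = 0) (s : ℝ) :
    (∫ x in (0:ℝ)..(g s), Real.sqrt (a x)) = s := by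
  set G : ℝ → ℝ := fun t => ∫ x in (0:ℝ)..t, Real.sqrt (a x) with hGdef
  have key : ∀ s, G (g s) - s = G (g 0) - 0 := by
    intro s
    apply is_const_of_deriv_eq_zero (f := fun s => G (g s) - s)
    · intro t
      exact (((hasDerivAt_G ha (g t)).comp t (hg t)).sub (hasDerivAt_id t)).differentiableAt
    · intro t
      have h1 : HasDerivAt (fun s => G (g s) - s)
          (Real.sqrt (a (g t)) * (1 / Real.sqrt (a (g t))) - 1) t :=
        ((hasDerivAt_G ha (g t)).comp t (hg t)).sub (hasDerivAt_id t)
      rw [h1.deriv, mul_one_div, div_self (ne_of_gt (Real.sqrt_pos.2 (lt_of_lt_of_le hν (hb _)))),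
        sub_self]
  have := key s
  rw [hg0] at this
  have hG0 : G 0 = 0 := intervalIntegral.integral_same
  rw [hG0] at this
  linarith [this]

lemma g_G_id (ha : Continuous a) (hν : 0 < ν) (hb : ∀ s, ν ≤ a s)
    (hg : ∀ s, HasDerivAt g (1 / Real.sqrt (a (g s))) s) (hg0 : g 0 = 0) (t : ℝ) :
    g (∫ x in (0:ℝ)..t, Real.sqrt (a x)) = t :=
  (strictMono_G ha hν hb).injective
    (G_g_id ha hν hb hg hg0 (∫ x in (0:ℝ)..t, Real.sqrt (a x)))

lemma G_le (ha : Continuous a) (C : ℝ) (t : ℝ) (ht : 0 ≤ t)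
    (hC : ∀ s ∈ Set.Icc 0 t, Real.sqrt (a s) ≤ C) :
    (∫ x in (0:ℝ)..t, Real.sqrt (a x)) ≤ C * t := by
  have : (∫ x in (0:ℝ)..t, Real.sqrt (a x)) ≤ ∫ _x in (0:ℝ)..t, C := by
    apply intervalIntegral.integral_mono_on ht
      ((Real.continuous_sqrt.comp ha).intervalIntegrable _ _) (intervalIntegrable_const)
    intro s hs
    exact hC s hs
  simpa [mul_comm] using this

lemma norm_fderiv_eq_norm_gradient (u : EuclideanSpace ℝ (Fin n) → ℝ)
    (x : EuclideanSpace ℝ (Fin n)) : ‖fderiv ℝ u x‖ = ‖gradient u x‖ := by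
  rw [show gradient u x = (InnerProductSpace.toDual ℝ _).symm (fderiv ℝ u x) from rfl,
    LinearIsometryEquiv.norm_map]

variable {u : EuclideanSpace ℝ (Fin n) → ℝ} {φ φ' φ'' : ℝ → ℝ}

lemma fderiv_comp_phi (hu : ContDiff ℝ 2 u) (hφ' : ∀ t, HasDerivAt φ (φ' t) t)
    (y : EuclideanSpace ℝ (Fin n)) :
    HasFDerivAt (fun z => φ (u z)) (φ' (u y) • fderiv ℝ u y) y :=
  (hφ' (u y)).comp_hasFDerivAt y
    (hu.differentiable (by norm_num) y).hasFDerivAt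

lemma lap_comp (hu : ContDiff ℝ 2 u) (hφ' : ∀ t, HasDerivAt φ (φ' t) t)
    (hφ'' : ∀ t, HasDerivAt φ' (φ'' t) t) (x : EuclideanSpace ℝ (Fin n)) :
    lap (fun z => φ (u z)) x
      = φ'' (u x) * ‖gradient u x‖ ^ 2 + φ' (u x) * lap u x := by
  have hdu : ∀ y, HasFDerivAt u (fderiv ℝ u y) y :=
    fun y => (hu.differentiable (by norm_num) y).hasFDerivAt
  have hfd : ∀ i : Fin n, (fun y => fderiv ℝ (fun z => φ (u z)) y (EuclideanSpace.single i 1))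
      = fun y => φ' (u y) * fderiv ℝ u y (EuclideanSpace.single i 1) := by
    intro i; funext y
    rw [(fderiv_comp_phi hu hφ' y).fderiv]
    simp
  have hD : ∀ (i : Fin n) (y), HasFDerivAt (fun z => fderiv ℝ u z (EuclideanSpace.single i 1))
      (fderiv ℝ (fun z => fderiv ℝ u z (EuclideanSpace.single i 1)) y) y := by
    intro i y
    have h2 : ContDiff ℝ 1 (fderiv ℝ u) := by
      rw [show (2 : WithTop ℕ∞) = 1 + 1 from rfl, contDiff_succ_iff_fderiv] at hu
      exact hu.2.2
    have : Differentiable ℝ (fun z => fderiv ℝ u z (EuclideanSpace.single i 1)) := by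
      exact fun z => ((ContinuousLinearMap.apply ℝ ℝ
        ((EuclideanSpace.single i 1 : EuclideanSpace ℝ (Fin n)))).differentiable.comp
        (h2.differentiable one_ne_zero)) z
    exact (this y).hasFDerivAt
  unfold lap
  have key : ∀ i : Fin n,
      fderiv ℝ (fun y => fderiv ℝ (fun z => φ (u z)) y (EuclideanSpace.single i 1)) x
        (EuclideanSpace.single i 1)
      = φ'' (u x) * (fderiv ℝ u x (EuclideanSpace.single i 1)) ^ 2
        + φ' (u x) * fderiv ℝ (fun z => fderiv ℝ u z (EuclideanSpace.single i 1)) x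
            (EuclideanSpace.single i 1) := by
    intro i
    rw [hfd i]
    have hφu : HasFDerivAt (fun z => φ' (u z)) (φ'' (u x) • fderiv ℝ u x) x :=
      (hφ'' (u x)).comp_hasFDerivAt x (hdu x)
    have hprod : HasFDerivAt (fun y => φ' (u y) * fderiv ℝ u y (EuclideanSpace.single i 1)) _ x :=
      hφu.mul (hD i x)
    rw [hprod.fderiv]
    simp only [ContinuousLinearMap.add_apply, ContinuousLinearMap.smul_apply, smul_eq_mul]
    ring
  rw [Finset.sum_congr rfl fun i _ => key i, Finset.sum_add_distrib, ← Finset.mul_sum,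
    ← Finset.mul_sum]
  congr 1
  rw [EuclideanSpace.norm_eq, Real.sq_sqrt (by positivity)]
  congr 1
  apply Finset.sum_congr rfl
  intro i _
  have h1 : @inner ℝ _ _ (gradient u x) (EuclideanSpace.single i 1)
      = fderiv ℝ u x (EuclideanSpace.single i 1) := InnerProductSpace.toDual_symm_apply
  rw [EuclideanSpace.inner_single_right] at h1
  simp only [RCLike.inner_apply, map_one, mul_one] at h1 ⊢
  rw [← h1]
  simp [sq_abs]

lemma gradient_comp_G (ha : Continuous a) (hu : ContDiff ℝ 2 u)
    (x : EuclideanSpace ℝ (Fin n)) :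
    gradient (fun z => ∫ s in (0:ℝ)..(u z), Real.sqrt (a s)) x
      = Real.sqrt (a (u x)) • gradient u x := by
  have hfd : HasFDerivAt (fun z => ∫ s in (0:ℝ)..(u z), Real.sqrt (a s))
      (Real.sqrt (a (u x)) • fderiv ℝ u x) x :=
    (hasDerivAt_G ha (u x)).comp_hasFDerivAt x (hu.differentiable (by norm_num) x).hasFDerivAt
  show (InnerProductSpace.toDual ℝ _).symm
      (fderiv ℝ (fun z => ∫ s in (0:ℝ)..(u z), Real.sqrt (a s)) x)
    = Real.sqrt (a (u x)) • gradient u x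
  rw [hfd.fderiv, _root_.map_smul]
  rfl

end Aux

section Bounded
variable {n : ℕ}

set_option maxHeartbeats 2000000 in
lemma radial_bounded (u : EuclideanSpace ℝ (Fin (n+1)) → ℝ)
    (hu : ContDiff ℝ 2 u) (hu2 : MemLp u 2 volume)
    (hgrad2 : MemLp (fun x => ‖gradient u x‖) 2 volume)
    (hrad : ∀ x y, ‖x‖ = ‖y‖ → u x = u y) :
    ∃ M : ℝ, ∀ x, |u x| ≤ M := by
  classical
  set W : EuclideanSpace ℝ (Fin (n+1)) → ℝ := fun x => ‖gradient u x‖ with hW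
  have hucont : Continuous u := hu.continuous
  have hWcont : Continuous W := by
    have : Continuous (fderiv ℝ u) := (hu.fderiv_right (m := 1) (by norm_num)).continuous
    exact continuous_norm.comp <|
      (LinearIsometryEquiv.continuous _).comp this
  -- integrability of ρ = u² + W²
  have hInt1 : Integrable (fun x => u x ^ 2) volume :=
    (memLp_two_iff_integrable_sq hu2.aestronglyMeasurable).1 hu2
  have hInt2 : Integrable (fun x => W x ^ 2) volume :=
    (memLp_two_iff_integrable_sq hgrad2.aestronglyMeasurable).1 hgrad2
  have hIntρ : Integrable (fun x => u x ^ 2 + W x ^ 2) volume := hInt1.add hInt2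
  -- transport through measure-preserving equivalences
  set e1 := (MeasurableEquiv.toLp 2 (Fin (n+1) → ℝ)).symm with he1
  set e2 := MeasurableEquiv.piFinSuccAbove (fun _ : Fin (n+1) => ℝ) 0 with he2
  set Φ : ℝ × (Fin n → ℝ) → EuclideanSpace ℝ (Fin (n+1)) :=
    fun z => e1.symm (e2.symm z) with hΦ
  have hmp : MeasurePreserving Φ volume volume := by
    have m1 : MeasurePreserving e1.symm volume volume :=
      (EuclideanSpace.volume_preserving_symm_measurableEquiv_toLp (Fin (n+1))).symm
    have m2 : MeasurePreserving e2.symm volume volume :=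
      (volume_preserving_piFinSuccAbove (fun _ : Fin (n+1) => ℝ) 0).symm
    exact m1.comp m2
  have hemb : MeasurableEmbedding Φ :=
    (e2.symm.trans e1.symm).measurableEmbedding
  have hIntΦ : Integrable (fun z : ℝ × (Fin n → ℝ) => u (Φ z) ^ 2 + W (Φ z) ^ 2) volume := by
    have := (hmp.integrable_comp_emb hemb (g := fun x => u x ^ 2 + W x ^ 2)).2 hIntρ
    exact this
  rw [Measure.volume_eq_prod] at hIntΦ
  have hae := hIntΦ.prod_left_ae
  obtain ⟨y, hy⟩ := hae.exists
  -- the line through Φ(0,y)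
  set e₀ : EuclideanSpace ℝ (Fin (n+1)) := EuclideanSpace.single 0 1 with he₀
  set b : EuclideanSpace ℝ (Fin (n+1)) := Φ (0, y) with hb
  have hline : ∀ t : ℝ, Φ (t, y) = b + t • e₀ := by
    intro t
    ext i
    simp only [hΦ, hb, he₀, he1, he2, MeasurableEquiv.symm_symm, MeasurableEquiv.toLp_apply,
      MeasurableEquiv.piFinSuccAbove_symm_apply,
      PiLp.add_apply, PiLp.smul_apply, EuclideanSpace.single_apply, PiLp.toLp_apply,
      smul_eq_mul]
    induction i using Fin.cases with
    | zero => simp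
    | succ j => simp [Fin.insertNth, Fin.succ_ne_zero]
  have hb0 : @inner ℝ _ _ b e₀ = 0 := by
    rw [he₀, EuclideanSpace.inner_single_right]
    simp only [map_one, one_mul, hb, hΦ, he1, he2, MeasurableEquiv.symm_symm, MeasurableEquiv.toLp_apply,
      PiLp.toLp_apply, MeasurableEquiv.piFinSuccAbove_symm_apply]
    simp
  have hne₀ : ‖e₀‖ = 1 := by
    rw [he₀, EuclideanSpace.norm_single]; simp
  -- ψ and its derivative
  set ψ : ℝ → ℝ := fun t => u (b + t • e₀) with hψ
  have hpath : ∀ t : ℝ, HasDerivAt (fun t : ℝ => b + t • e₀) e₀ t := by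
    intro t
    have h0 : HasDerivAt (fun s : ℝ => s • e₀) ((1:ℝ) • e₀) t :=
      HasDerivAt.smul_const (hasDerivAt_id t) e₀
    simpa using h0.const_add b
  have hψd : ∀ t, HasDerivAt ψ (fderiv ℝ u (b + t • e₀) e₀) t := fun t =>
    HasFDerivAt.comp_hasDerivAt t ((hu.differentiable (by norm_num) (b + t • e₀)).hasFDerivAt) (hpath t)
  have hψ'le : ∀ t : ℝ, |fderiv ℝ u (b + t • e₀) e₀| ≤ W (b + t • e₀) := by
    intro t
    calc |fderiv ℝ u (b + t • e₀) e₀| ≤ ‖fderiv ℝ u (b + t • e₀)‖ * ‖e₀‖ :=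
          (fderiv ℝ u (b + t • e₀)).le_opNorm e₀
    _ = W (b + t • e₀) := by rw [hne₀, mul_one, norm_fderiv_eq_norm_gradient]
  -- FTC bound
  set F : ℝ → ℝ := fun t => 2 * ψ t * fderiv ℝ u (b + t • e₀) e₀ with hF
  have hFcont : Continuous F := by
    have h1 : Continuous fun t : ℝ => b + t • e₀ :=
      continuous_const.add (continuous_id.smul continuous_const)
    have h2 : Continuous (fderiv ℝ u) := (hu.fderiv_right (m := 1) (by norm_num)).continuous
    have h3 : Continuous fun t : ℝ => fderiv ℝ u (b + t • e₀) e₀ :=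
      ((ContinuousLinearMap.apply ℝ ℝ e₀).continuous).comp (h2.comp h1)
    exact ((continuous_const.mul (hucont.comp h1)).mul h3)
  have hρψ : ∀ t : ℝ, |F t| ≤ ψ t ^ 2 + W (b + t • e₀) ^ 2 := by
    intro t
    have h1 : |F t| = 2 * |ψ t| * |fderiv ℝ u (b + t • e₀) e₀| := by
      rw [hF]; rw [abs_mul, abs_mul]; simp [abs_of_nonneg]
    rw [h1]
    nlinarith [hψ'le t, abs_nonneg (ψ t), abs_nonneg (fderiv ℝ u (b + t • e₀) e₀),
      sq_abs (ψ t), sq_nonneg (|ψ t| - |fderiv ℝ u (b + t • e₀) e₀|),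
      sq_nonneg (|ψ t| - W (b + t • e₀))]
  have hyInt : Integrable (fun t : ℝ => ψ t ^ 2 + W (b + t • e₀) ^ 2) volume := by
    have heq : (fun x : ℝ => u (Φ (x, y)) ^ 2 + W (Φ (x, y)) ^ 2)
        = fun t : ℝ => ψ t ^ 2 + W (b + t • e₀) ^ 2 := funext fun t => by rw [hline]
    exact heq ▸ hy
  set I₀ : ℝ := ∫ t : ℝ, (ψ t ^ 2 + W (b + t • e₀) ^ 2) with hI₀
  have hFint : Integrable F volume :=
    Integrable.mono' hyInt hFcont.aestronglyMeasurable
      (Filter.Eventually.of_forall fun t => by simpa [Real.norm_eq_abs] using hρψ t)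
  have habs : ∀ t : ℝ, |∫ s in (0:ℝ)..t, F s| ≤ I₀ := by
    intro t
    have hIoc : ∀ c d : ℝ, |∫ s in Set.Ioc c d, F s| ≤ I₀ := by
      intro c d
      calc |∫ s in Set.Ioc c d, F s| ≤ ∫ s in Set.Ioc c d, |F s| := by
            simpa [Real.norm_eq_abs] using
              MeasureTheory.norm_integral_le_integral_norm (μ := volume.restrict (Set.Ioc c d)) F
      _ ≤ ∫ s in Set.Ioc c d, (ψ s ^ 2 + W (b + s • e₀) ^ 2) :=
            MeasureTheory.setIntegral_mono (hFint.abs.integrableOn) (hyInt.integrableOn)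
              (fun s => hρψ s)
      _ ≤ I₀ := MeasureTheory.setIntegral_le_integral hyInt
              (Filter.Eventually.of_forall fun s => by positivity)
    rcases le_total 0 t with hle | hle
    · rw [intervalIntegral.integral_of_le hle]
      exact hIoc 0 t
    · rw [intervalIntegral.integral_of_ge hle, abs_neg]
      exact hIoc t 0
  have hkey : ∀ t : ℝ, ψ t ^ 2 ≤ ψ 0 ^ 2 + I₀ := by
    intro t
    have hsq : ∀ s : ℝ, HasDerivAt (fun r => ψ r ^ 2) (F s) s := by
      intro s
      have : HasDerivAt (fun r => ψ r ^ 2) _ s := (hψd s).pow 2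
      simpa [hF, mul_comm, mul_assoc, mul_left_comm] using this
    have hftc : ∫ s in (0:ℝ)..t, F s = ψ t ^ 2 - ψ 0 ^ 2 :=
      intervalIntegral.integral_eq_sub_of_hasDerivAt (fun s _ => hsq s)
        (hFcont.intervalIntegrable 0 t)
    have := habs t
    rw [hftc] at this
    have h2 := abs_le.1 this
    linarith [h2.2]
  set M₂ : ℝ := Real.sqrt (ψ 0 ^ 2 + I₀) with hM₂
  have hψbd : ∀ t : ℝ, |ψ t| ≤ M₂ := fun t => Real.abs_le_sqrt (hkey t)
  -- outer region
  have houter : ∀ x : EuclideanSpace ℝ (Fin (n+1)), ‖b‖ ≤ ‖x‖ → |u x| ≤ M₂ := by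
    intro x hx
    set t : ℝ := Real.sqrt (‖x‖ ^ 2 - ‖b‖ ^ 2) with ht
    have htsq : t ^ 2 = ‖x‖ ^ 2 - ‖b‖ ^ 2 :=
      Real.sq_sqrt (by nlinarith [norm_nonneg x, norm_nonneg b])
    have hnorm : ‖b + t • e₀‖ = ‖x‖ := by
      have hsq : ‖b + t • e₀‖ ^ 2 = ‖x‖ ^ 2 := by
        rw [norm_add_sq_real, real_inner_smul_right, hb0, norm_smul, hne₀]
        simp only [mul_zero, mul_one]
        rw [Real.norm_eq_abs, sq_abs]
        rw [htsq]; ring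
      calc ‖b + t • e₀‖ = Real.sqrt (‖b + t • e₀‖ ^ 2) := (Real.sqrt_sq (norm_nonneg _)).symm
      _ = Real.sqrt (‖x‖ ^ 2) := by rw [hsq]
      _ = ‖x‖ := Real.sqrt_sq (norm_nonneg _)
    have : u x = ψ t := hrad x (b + t • e₀) hnorm.symm
    rw [this]; exact hψbd t
  -- inner region
  obtain ⟨C, hC⟩ : ∃ C, ∀ r ∈ Set.Icc (0:ℝ) ‖b‖, ‖u (r • e₀)‖ ≤ C := by
    apply IsCompact.exists_bound_of_continuousOn isCompact_Icc
    exact (hucont.comp (continuous_id.smul continuous_const)).continuousOn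
  refine ⟨max M₂ C, fun x => ?_⟩
  rcases le_total ‖b‖ ‖x‖ with hx | hx
  · exact le_max_of_le_left (houter x hx)
  · have hn : ‖(‖x‖ • e₀ : EuclideanSpace ℝ (Fin (n+1)))‖ = ‖x‖ := by
      rw [norm_smul, hne₀, Real.norm_eq_abs, abs_of_nonneg (norm_nonneg x), mul_one]
    have : u x = u (‖x‖ • e₀) := hrad x _ hn.symm
    rw [this]
    exact le_max_of_le_right (by simpa [Real.norm_eq_abs] using hC ‖x‖ ⟨norm_nonneg x, hx⟩)

end Bounded

section Main

open intervalIntegral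

lemma QL_to_dual {n : ℕ} (a : ℝ → ℝ) (ν : ℝ) (hν : 0 < ν)
    (ha : ContDiff ℝ 2 a) (hbound : ∀ s, ν ≤ a s)
    (p m : ℝ)
    (g : ℝ → ℝ) (hg : ∀ s, HasDerivAt g (1 / Real.sqrt (a (g s))) s) (hg0 : g 0 = 0)
    (h : ℝ → ℝ)
    (hh : ∀ t, h t = (|g t| ^ (p - 1) * g t - m * g t) / Real.sqrt (a (g t)))
    (u : EuclideanSpace ℝ (Fin (n+1)) → ℝ) (hu : IsQLSolution (n+1) a m p u) :
    IsDualSolution (n+1) h (fun x => ∫ s in (0:ℝ)..(u x), Real.sqrt (a s)) := by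
  obtain ⟨huC, huL2, hugrad, huX, hupos, hurad, hueq⟩ := hu
  have hGC : ContDiff ℝ 2 (fun t => ∫ s in (0:ℝ)..t, Real.sqrt (a s)) :=
    contDiff_G ha hν hbound
  have hvC : ContDiff ℝ 2 (fun x => ∫ s in (0:ℝ)..(u x), Real.sqrt (a s)) := hGC.comp huC
  have hG0 : (∫ s in (0:ℝ)..(0:ℝ), Real.sqrt (a s)) = 0 := intervalIntegral.integral_same
  have hGmono := strictMono_G ha.continuous hν hbound
  have hvpos : ∀ x, 0 < ∫ s in (0:ℝ)..(u x), Real.sqrt (a s) := by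
    intro x
    simpa only [hG0] using hGmono (hupos x)
  -- L² bound for v
  obtain ⟨M, hM⟩ := radial_bounded u huC huL2 hugrad hurad
  obtain ⟨C, hC⟩ : ∃ C, ∀ s ∈ Set.Icc (0:ℝ) M, ‖Real.sqrt (a s)‖ ≤ C :=
    IsCompact.exists_bound_of_continuousOn isCompact_Icc
      ((Real.continuous_sqrt.comp ha.continuous).continuousOn)
  have hvL2 : MemLp (fun x => ∫ s in (0:ℝ)..(u x), Real.sqrt (a s)) 2 volume := by
    apply MemLp.of_le_mul (c := C) huL2 hvC.continuous.aestronglyMeasurable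
    apply Filter.Eventually.of_forall
    intro x
    have h1 : (∫ s in (0:ℝ)..(u x), Real.sqrt (a s)) ≤ C * u x := by
      apply G_le ha.continuous C (u x) (hupos x).le
      intro s hs
      have : s ∈ Set.Icc (0:ℝ) M :=
        ⟨hs.1, le_trans hs.2 (le_trans (le_abs_self _) (hM x))⟩
      exact le_trans (le_abs_self _) (by simpa [Real.norm_eq_abs] using hC s this)
    rw [Real.norm_eq_abs, Real.norm_eq_abs, abs_of_pos (hvpos x), abs_of_pos (hupos x)]
    exact h1
  -- gradient of v
  have hgradv : ∀ x, ‖gradient (fun x => ∫ s in (0:ℝ)..(u x), Real.sqrt (a s)) x‖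
      = Real.sqrt (a (u x)) * ‖gradient u x‖ := by
    intro x
    rw [gradient_comp_G ha.continuous huC x, norm_smul, Real.norm_eq_abs,
      abs_of_nonneg (Real.sqrt_nonneg _)]
  have hgradv2 : MemLp
      (fun x => ‖gradient (fun x => ∫ s in (0:ℝ)..(u x), Real.sqrt (a s)) x‖) 2 volume := by
    have hmeas : AEStronglyMeasurable
        (fun x => ‖gradient (fun x => ∫ s in (0:ℝ)..(u x), Real.sqrt (a s)) x‖) volume := by
      have hc : Continuous (fderiv ℝ (fun x => ∫ s in (0:ℝ)..(u x), Real.sqrt (a s))) :=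
        (hvC.fderiv_right (m := 1) (by norm_num)).continuous
      exact (continuous_norm.comp
        ((LinearIsometryEquiv.continuous _).comp hc)).aestronglyMeasurable
    rw [memLp_two_iff_integrable_sq hmeas]
    apply huX.congr
    apply Filter.Eventually.of_forall
    intro x
    show a (u x) * ‖gradient u x‖ ^ 2
      = ‖gradient (fun x => ∫ s in (0:ℝ)..(u x), Real.sqrt (a s)) x‖ ^ 2
    rw [hgradv x, mul_pow, Real.sq_sqrt (le_trans hν.le (hbound _))]
  -- radial
  have hvrad : ∀ x y, ‖x‖ = ‖y‖ →
      (∫ s in (0:ℝ)..(u x), Real.sqrt (a s)) = ∫ s in (0:ℝ)..(u y), Real.sqrt (a s) := by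
    intro x y hxy
    rw [hurad x y hxy]
  -- PDE
  have hPDE : ∀ x, -lap (fun x => ∫ s in (0:ℝ)..(u x), Real.sqrt (a s)) x
      = h (∫ s in (0:ℝ)..(u x), Real.sqrt (a s)) := by
    intro x
    have hsqa' : ∀ t : ℝ, HasDerivAt (fun t => Real.sqrt (a t))
        (deriv a t / (2 * Real.sqrt (a t))) t := fun t =>
      ((ha.differentiable (by norm_num) t).hasDerivAt).sqrt
        (ne_of_gt (lt_of_lt_of_le hν (hbound t)))
    have hlap : lap (fun x => ∫ s in (0:ℝ)..(u x), Real.sqrt (a s)) x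
        = deriv a (u x) / (2 * Real.sqrt (a (u x))) * ‖gradient u x‖ ^ 2
          + Real.sqrt (a (u x)) * lap u x :=
      lap_comp huC (fun t => hasDerivAt_G ha.continuous t) hsqa' x
    rw [hlap, hh, g_G_id ha.continuous hν hbound hg hg0 (u x),
      abs_of_pos (hupos x)]
    have hrp : u x ^ (p - 1) * u x = u x ^ p := by
      nth_rewrite 2 [show u x = u x ^ (1:ℝ) from (Real.rpow_one _).symm]
      rw [← Real.rpow_add (hupos x)]
      norm_num
    rw [hrp]
    have hSpos : 0 < Real.sqrt (a (u x)) := sqa_pos hν hbound (u x)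
    have hS : Real.sqrt (a (u x)) ^ 2 = a (u x) := Real.sq_sqrt (le_trans hν.le (hbound _))
    have hQL := hueq x
    rw [eq_div_iff (ne_of_gt hSpos)]
    have h1 : (deriv a (u x) / (2 * Real.sqrt (a (u x))) * ‖gradient u x‖ ^ 2
        + Real.sqrt (a (u x)) * lap u x) * Real.sqrt (a (u x))
        = deriv a (u x) * ‖gradient u x‖ ^ 2 / 2 + a (u x) * lap u x := by
      field_simp; rw [hS]; ring
    rw [neg_mul, h1]
    linarith [hQL]
  exact ⟨hvC, hvL2, hgradv2, hvpos, hvrad, hPDE⟩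

end Main

theorem uniqueness_transfers_from_dual
    (N : ℕ) (hN : 3 ≤ N)
    (a : ℝ → ℝ) (ν : ℝ) (hν : 0 < ν)
    (ha : ContDiff ℝ 2 a) (hbound : ∀ s, ν ≤ a s)
    (k a₁ : ℝ) (hk : 0 < k) (ha₁ : 0 < a₁)
    (hlim : Tendsto (fun s : ℝ => a s / s ^ k) atTop (𝓝 a₁))
    (p m : ℝ) (hp1 : 1 < p) (hp2 : p < ((k + 1) * N + 2) / (N - 2)) (hm : 0 < m)
    (g : ℝ → ℝ)
    (hg : ∀ s, HasDerivAt g (1 / Real.sqrt (a (g s))) s) (hg0 : g 0 = 0)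
    (h : ℝ → ℝ)
    (hh : ∀ t, h t = (|g t| ^ (p - 1) * g t - m * g t) / Real.sqrt (a (g t)))
    (hdual : ∀ v₁ v₂ : EuclideanSpace ℝ (Fin N) → ℝ,
      IsDualSolution N h v₁ → IsDualSolution N h v₂ →
      ∃ x₀ : EuclideanSpace ℝ (Fin N), ∀ x, v₁ x = v₂ (x + x₀)) :
    ∀ u₁ u₂ : EuclideanSpace ℝ (Fin N) → ℝ,
      IsQLSolution N a m p u₁ → IsQLSolution N a m p u₂ →
      ∃ x₀ : EuclideanSpace ℝ (Fin N), ∀ x, u₁ x = u₂ (x + x₀) := by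
  obtain ⟨n, rfl⟩ : ∃ n, N = n + 1 := ⟨N - 1, by omega⟩
  intro u₁ u₂ h₁ h₂
  obtain ⟨x₀, hx₀⟩ := hdual _ _
    (QL_to_dual a ν hν ha hbound p m g hg hg0 h hh u₁ h₁)
    (QL_to_dual a ν hν ha hbound p m g hg hg0 h hh u₂ h₂)
  refine ⟨x₀, fun x => ?_⟩
  exact (strictMono_G ha.continuous hν hbound).injective (hx₀ x)
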